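/- Under hypotheses (H1)–(H6) of the topological setting (D a ℤ-graded topological bialgebra containing graded bialgebras A, B with a nondegenerate graded bialgebra pairing, coideal subalgebras A₁, A₂ ⊆ A and B₁, B₂ ⊆ B with triangular decompositions), let f ∈ Hom₋(B, D̂) be the image of R₁^{-1} and P₂, P₁ the projections with P₂(b₂b₁) = b₂ε(b₁), P₁(b₂b₁) = ε(b₂)b₁. Then f satisfies: f(b₂b₁) = f(b₂)ε(b₁) for b₁ ∈ B₁, b₂ ∈ B₂, and f(b^{(2)}) b^{(1)} = P₁(b) for all b ∈ B. -/
import Mathlib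


open TensorProduct

noncomputable section

/-- The tensor product of two submodules, as a submodule of the tensor product. -/
def sTen (k : Type*) [CommSemiring k] {A B : Type*} [AddCommMonoid A] [AddCommMonoid B]
    [Module k A] [Module k B] (p : Submodule k A) (q : Submodule k B) :
    Submodule k (A ⊗[k] B) :=
  LinearMap.range (TensorProduct.map p.subtype q.subtype)

section Aux13
variable {k : Type*} [CommSemiring k]

lemma sTen13_induction {A B M : Type*} [AddCommMonoid A] [AddCommMonoid B] [AddCommMonoid M]
    [Module k A] [Module k B] [Module k M]
    {p : Submodule k A} {q : Submodule k B} {L L' : A ⊗[k] B →ₗ[k] M}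
    (h : ∀ (x : p) (y : q), L ((x : A) ⊗ₜ[k] (y : B)) = L' ((x : A) ⊗ₜ[k] (y : B))) :
    ∀ v ∈ sTen k p q, L v = L' v := by
  rintro v ⟨t, rfl⟩
  have h2 : L ∘ₗ TensorProduct.map p.subtype q.subtype
      = L' ∘ₗ TensorProduct.map p.subtype q.subtype :=
    TensorProduct.ext' fun x y => by simpa using h x y
  exact LinearMap.congr_fun h2 t

lemma ext_via_surj13 {M N T : Type*} [AddCommMonoid M] [AddCommMonoid N] [AddCommMonoid T]
    [Module k M] [Module k N] [Module k T]
    (π : T →ₗ[k] M) (hπ : Function.Surjective π) {L L' : M →ₗ[k] N}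
    (h : L ∘ₗ π = L' ∘ₗ π) : L = L' :=
  (LinearMap.cancel_right hπ).mp h

end Aux13

section Conv13

variable (k : Type*) [CommSemiring k] {B : Type*} [Ring B] [Bialgebra k B]
  {D : Type*} [Ring D] [Algebra k D]

/-- Twisted convolution: `(conv u v) b = u (b⁽²⁾) * v (b⁽¹⁾)`. -/
def conv13 (u v : B →ₗ[k] D) : B →ₗ[k] D :=
  LinearMap.mul' k D ∘ₗ TensorProduct.map u v ∘ₗ (TensorProduct.comm k B B).toLinearMap
    ∘ₗ Coalgebra.comul

lemma conv13_apply (u v : B →ₗ[k] D) (b : B) :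
    conv13 k u v b = LinearMap.mul' k D (TensorProduct.map u v
      ((TensorProduct.comm k B B) (Coalgebra.comul b))) := rfl

/-- The unit of the (twisted) convolution algebra. -/
def oneConv13 : B →ₗ[k] D := Algebra.linearMap k D ∘ₗ Coalgebra.counit

lemma oneConv13_apply (b : B) :
    (oneConv13 k : B →ₗ[k] D) b = Coalgebra.counit (R := k) b • (1 : D) := by
  simp [oneConv13, Algebra.algebraMap_eq_smul_one]

lemma conv13_oneConv13 (u : B →ₗ[k] D) : conv13 k u (oneConv13 k) = u := by
  ext b
  have h : LinearMap.mul' k D ∘ₗ TensorProduct.map u (oneConv13 k)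
        ∘ₗ (TensorProduct.comm k B B).toLinearMap
      = (LinearMap.mul' k D ∘ₗ TensorProduct.map u (Algebra.linearMap k D)
        ∘ₗ (TensorProduct.comm k k B).toLinearMap)
        ∘ₗ (Coalgebra.counit (R := k)).rTensor B :=
    TensorProduct.ext' fun x y => by
      simp [oneConv13, Algebra.algebraMap_eq_smul_one, mul_smul_comm]
  have h2 := LinearMap.congr_fun h (Coalgebra.comul (R := k) b)
  simp only [LinearMap.coe_comp, LinearEquiv.coe_coe, Function.comp_apply] at h2
  rw [conv13_apply, h2, Coalgebra.rTensor_counit_comul]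
  simp

lemma oneConv13_conv13 (u : B →ₗ[k] D) : conv13 k (oneConv13 k) u = u := by
  ext b
  have h : LinearMap.mul' k D ∘ₗ TensorProduct.map (oneConv13 k) u
        ∘ₗ (TensorProduct.comm k B B).toLinearMap
      = (LinearMap.mul' k D ∘ₗ TensorProduct.map (Algebra.linearMap k D) u
        ∘ₗ (TensorProduct.comm k B k).toLinearMap)
        ∘ₗ (Coalgebra.counit (R := k)).lTensor B :=
    TensorProduct.ext' fun x y => by
      simp [oneConv13, Algebra.algebraMap_eq_smul_one, smul_mul_assoc]
  have h2 := LinearMap.congr_fun h (Coalgebra.comul (R := k) b)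
  simp only [LinearMap.coe_comp, LinearEquiv.coe_coe, Function.comp_apply] at h2
  rw [conv13_apply, h2, Coalgebra.lTensor_counit_comul]
  simp

lemma conv13_assoc (u v w : B →ₗ[k] D) :
    conv13 k (conv13 k u v) w = conv13 k u (conv13 k v w) := by
  set ξ : (B ⊗[k] B) ⊗[k] B →ₗ[k] D :=
    LinearMap.mul' k D ∘ₗ
      TensorProduct.map u (LinearMap.mul' k D ∘ₗ TensorProduct.map v w
        ∘ₗ (TensorProduct.comm k B B).toLinearMap)
      ∘ₗ (TensorProduct.comm k (B ⊗[k] B) B).toLinearMap with hξ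
  set ξ' : B ⊗[k] (B ⊗[k] B) →ₗ[k] D :=
    LinearMap.mul' k D ∘ₗ
      TensorProduct.map (LinearMap.mul' k D ∘ₗ TensorProduct.map u v
        ∘ₗ (TensorProduct.comm k B B).toLinearMap) w
      ∘ₗ (TensorProduct.comm k B (B ⊗[k] B)).toLinearMap with hξ'
  have h1 : LinearMap.mul' k D ∘ₗ TensorProduct.map u (conv13 k v w)
      ∘ₗ (TensorProduct.comm k B B).toLinearMap
      = ξ ∘ₗ (Coalgebra.comul (R := k)).rTensor B :=
    TensorProduct.ext' fun x y => by
      simp [hξ, conv13_apply]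
  have h2 : LinearMap.mul' k D ∘ₗ TensorProduct.map (conv13 k u v) w
      ∘ₗ (TensorProduct.comm k B B).toLinearMap
      = ξ' ∘ₗ (Coalgebra.comul (R := k)).lTensor B :=
    TensorProduct.ext' fun x y => by
      simp [hξ', conv13_apply]
  have h3 : ξ = ξ' ∘ₗ (TensorProduct.assoc k B B B).toLinearMap :=
    TensorProduct.ext_threefold fun x y z => by
      simp [hξ, hξ', mul_assoc]
  ext b
  have e1 := LinearMap.congr_fun h1 (Coalgebra.comul (R := k) b)
  have e2 := LinearMap.congr_fun h2 (Coalgebra.comul (R := k) b)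
  simp only [LinearMap.coe_comp, LinearEquiv.coe_coe, Function.comp_apply] at e1 e2
  rw [conv13_apply, conv13_apply, e1, e2, ← Coalgebra.coassoc_apply, h3]
  simp

lemma conv13_comp_algHom {B' : Type*} [Ring B'] [Algebra k B'] (ι : B' →ₐ[k] D)
    (u v : B →ₗ[k] B') :
    conv13 k (ι.toLinearMap ∘ₗ u) (ι.toLinearMap ∘ₗ v) = ι.toLinearMap ∘ₗ conv13 k u v := by
  ext b
  have h : LinearMap.mul' k D ∘ₗ TensorProduct.map (ι.toLinearMap ∘ₗ u) (ι.toLinearMap ∘ₗ v)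
      = ι.toLinearMap ∘ₗ LinearMap.mul' k B' ∘ₗ TensorProduct.map u v :=
    TensorProduct.ext' fun x y => by simp
  have h2 := LinearMap.congr_fun h ((TensorProduct.comm k B B) (Coalgebra.comul (R := k) b))
  simp only [LinearMap.coe_comp, Function.comp_apply] at h2
  rw [conv13_apply, h2]
  simp only [LinearMap.comp_apply, conv13_apply]

end Conv13

/-- in the topological setting (H1)–(H6), let `B = B₂B₁` be the
triangular decomposition of `B` (realized inside the big algebra `D` via `ι`),
with projections `P₂(b₂b₁) = b₂ ε(b₁)`, `P₁(b₂b₁) = ε(b₂) b₁`, and let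
`f = [R₁^{-1}]` be the image of `R₁⁻¹` in the convolution algebra
`Hom₋(B, D̂)`, so that `f * P₂ = P₂ * f = 1_*` (the convolution being
`(f₁ * f₂)(b) = f₁(b⁽²⁾)f₂(b⁽¹⁾)`).  Then `f(b₂b₁) = f(b₂)ε(b₁)` for
`b₂ ∈ B₂`, `b₁ ∈ B₁`, and `f(b⁽²⁾)·b⁽¹⁾ = P₁(b)` for all `b ∈ B`. -/
theorem stmt13 (k : Type*) [Field k] {B D : Type*} [Ring B] [Bialgebra k B]
    [Ring D] [Algebra k D]
    (ι : B →ₐ[k] D) (hι : Function.Injective ι)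
    (B₁ B₂ : Subalgebra k B)
    -- B₁ is a left coideal, B₂ a right coideal of B
    (hB₁ : ∀ x ∈ B₁, Coalgebra.comul (R := k) x ∈ sTen k ⊤ (Subalgebra.toSubmodule B₁))
    (hB₂ : ∀ x ∈ B₂, Coalgebra.comul (R := k) x ∈ sTen k (Subalgebra.toSubmodule B₂) ⊤)
    -- the product map B₂ ⊗ B₁ → B is a linear isomorphism
    (hiso : Function.Bijective
      ((LinearMap.mul' k B).comp
        (TensorProduct.map (Subalgebra.toSubmodule B₂).subtype
          (Subalgebra.toSubmodule B₁).subtype)))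
    -- the projections P₂, P₁ on the two factors
    (P₁ P₂ : B →ₗ[k] B)
    (hP₁ : ∀ b₂ ∈ B₂, ∀ b₁ ∈ B₁, P₁ (b₂ * b₁) = Coalgebra.counit (R := k) b₂ • b₁)
    (hP₂ : ∀ b₂ ∈ B₂, ∀ b₁ ∈ B₁, P₂ (b₂ * b₁) = Coalgebra.counit (R := k) b₁ • b₂)
    -- f = [R₁⁻¹], with values in (the completion of) D
    (f : B →ₗ[k] D)
    -- f * P₂ = 1_* :  f(b⁽²⁾) P₂(b⁽¹⁾) = ε(b) 1
    (hconv₁ : ∀ b : B,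
      LinearMap.mul' k D
        ((TensorProduct.map f (ι.toLinearMap.comp P₂))
          ((TensorProduct.comm k B B) (Coalgebra.comul (R := k) b)))
        = Coalgebra.counit (R := k) b • (1 : D))
    -- P₂ * f = 1_* :  P₂(b⁽²⁾) f(b⁽¹⁾) = ε(b) 1
    (hconv₂ : ∀ b : B,
      LinearMap.mul' k D
        ((TensorProduct.map (ι.toLinearMap.comp P₂) f)
          ((TensorProduct.comm k B B) (Coalgebra.comul (R := k) b)))
        = Coalgebra.counit (R := k) b • (1 : D)) :
    -- conclusion (i): f(b₂b₁) = f(b₂) ε(b₁)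
    (∀ b₂ ∈ B₂, ∀ b₁ ∈ B₁, f (b₂ * b₁) = Coalgebra.counit (R := k) b₁ • f b₂) ∧
    -- conclusion (ii): f(b⁽²⁾) b⁽¹⁾ = P₁(b)
    (∀ b : B,
      LinearMap.mul' k D
        ((TensorProduct.map f ι.toLinearMap)
          ((TensorProduct.comm k B B) (Coalgebra.comul (R := k) b)))
        = ι (P₁ b)) := by
  have hπ : Function.Surjective
      ((LinearMap.mul' k B).comp
        (TensorProduct.map (Subalgebra.toSubmodule B₂).subtype
          (Subalgebra.toSubmodule B₁).subtype)) := hiso.2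
  have hP₂id : ∀ c ∈ B₂, P₂ c = c := fun c hc => by
    have := hP₂ c hc 1 (one_mem B₁)
    simpa using this
  have hP₁id : ∀ c ∈ B₁, P₁ c = c := fun c hc => by
    have := hP₁ 1 (one_mem B₂) c hc
    simpa using this
  -- P₂ (x * c₁) = ε c₁ • P₂ x  for c₁ ∈ B₁
  have hP₂r : ∀ c₁ ∈ B₁, ∀ x : B,
      P₂ (x * c₁) = Coalgebra.counit (R := k) c₁ • P₂ x := by
    intro c₁ hc₁
    have hmap : P₂ ∘ₗ LinearMap.mulRight k c₁ = Coalgebra.counit (R := k) c₁ • P₂ := by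
      apply ext_via_surj13 _ hπ
      apply TensorProduct.ext'
      intro x y
      simp only [LinearMap.coe_comp, Function.comp_apply, TensorProduct.map_tmul,
        Submodule.coe_subtype, LinearMap.mul'_apply, LinearMap.mulRight_apply,
        LinearMap.smul_apply]
      rw [mul_assoc, hP₂ _ x.2 _ (mul_mem y.2 hc₁), hP₂ _ x.2 _ y.2,
        Bialgebra.counit_mul, smul_smul, mul_comm]
    exact fun x => LinearMap.congr_fun hmap x
  -- P₁ (c₂ * x) = ε c₂ • P₁ x  for c₂ ∈ B₂
  have hP₁l : ∀ c₂ ∈ B₂, ∀ x : B,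
      P₁ (c₂ * x) = Coalgebra.counit (R := k) c₂ • P₁ x := by
    intro c₂ hc₂
    have hmap : P₁ ∘ₗ LinearMap.mulLeft k c₂ = Coalgebra.counit (R := k) c₂ • P₁ := by
      apply ext_via_surj13 _ hπ
      apply TensorProduct.ext'
      intro x y
      simp only [LinearMap.coe_comp, Function.comp_apply, TensorProduct.map_tmul,
        Submodule.coe_subtype, LinearMap.mul'_apply, LinearMap.mulLeft_apply,
        LinearMap.smul_apply]
      rw [← mul_assoc, hP₁ _ (mul_mem hc₂ x.2) _ y.2, hP₁ _ x.2 _ y.2,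
        Bialgebra.counit_mul, smul_smul]
    exact fun x => LinearMap.congr_fun hmap x
  set G : B ⊗[k] B →ₗ[k] B :=
    LinearMap.mul' k B ∘ₗ TensorProduct.map P₂ P₁
      ∘ₗ (TensorProduct.comm k B B).toLinearMap with hG
  set E₂ : B ⊗[k] B →ₗ[k] B :=
    (TensorProduct.lid k B).toLinearMap ∘ₗ LinearMap.lTensor k P₂
      ∘ₗ LinearMap.rTensor B (Coalgebra.counit (R := k)) with hE₂def
  set E₁ : B ⊗[k] B →ₗ[k] B :=
    (TensorProduct.rid k B).toLinearMap ∘ₗ LinearMap.rTensor k P₁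
      ∘ₗ LinearMap.lTensor B (Coalgebra.counit (R := k)) with hE₁def
  have hE₂pure : ∀ (a b : B), E₂ (a ⊗ₜ[k] b) = Coalgebra.counit (R := k) a • P₂ b := by
    intro a b; simp [hE₂def]
  have hE₁pure : ∀ (a b : B), E₁ (a ⊗ₜ[k] b) = Coalgebra.counit (R := k) b • P₁ a := by
    intro a b; simp [hE₁def]
  have key2 : ∀ (x c₁ : B), c₁ ∈ B₁ →
      ∀ u ∈ sTen k (Subalgebra.toSubmodule B₂) (⊤ : Submodule k B),
        G (u * (x ⊗ₜ[k] c₁)) = E₂ u * (Coalgebra.counit (R := k) c₁ • P₁ x) := by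
    intro x c₁ hc₁
    have h := sTen13_induction (k := k)
      (L := G ∘ₗ LinearMap.mulRight k (x ⊗ₜ[k] c₁))
      (L' := LinearMap.mulRight k (Coalgebra.counit (R := k) c₁ • P₁ x) ∘ₗ E₂)
      (fun (p : Subalgebra.toSubmodule B₂) (q : (⊤ : Submodule k B)) => by
        simp only [LinearMap.coe_comp, Function.comp_apply, LinearMap.mulRight_apply,
          Algebra.TensorProduct.tmul_mul_tmul]
        rw [hE₂pure]
        simp only [hG, LinearMap.coe_comp, LinearEquiv.coe_coe, Function.comp_apply,
          TensorProduct.comm_tmul, TensorProduct.map_tmul, LinearMap.mul'_apply]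
        rw [hP₂r _ hc₁, hP₁l _ p.2, smul_mul_assoc, smul_mul_assoc,
          mul_smul_comm, mul_smul_comm, smul_smul, smul_smul, mul_comm
            (Coalgebra.counit (R := k) c₁)])
    intro u hu
    simpa using h u hu
  have key : ∀ u ∈ sTen k (Subalgebra.toSubmodule B₂) (⊤ : Submodule k B),
      ∀ v ∈ sTen k (⊤ : Submodule k B) (Subalgebra.toSubmodule B₁),
        G (u * v) = E₂ u * E₁ v := by
    intro u hu
    have h := sTen13_induction (k := k)
      (L := G ∘ₗ LinearMap.mulLeft k u)
      (L' := LinearMap.mulLeft k (E₂ u) ∘ₗ E₁)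
      (fun (x : (⊤ : Submodule k B)) (c₁ : Subalgebra.toSubmodule B₁) => by
        simp only [LinearMap.coe_comp, Function.comp_apply, LinearMap.mulLeft_apply]
        rw [key2 _ _ c₁.2 u hu, hE₁pure])
    intro v hv
    simpa using h v hv
  have hE₂Δ : ∀ b : B, E₂ (Coalgebra.comul (R := k) b) = P₂ b := fun b => by
    simp only [hE₂def, LinearMap.coe_comp, LinearEquiv.coe_coe, Function.comp_apply]
    rw [Coalgebra.rTensor_counit_comul]
    simp
  have hE₁Δ : ∀ b : B, E₁ (Coalgebra.comul (R := k) b) = P₁ b := fun b => by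
    simp only [hE₁def, LinearMap.coe_comp, LinearEquiv.coe_coe, Function.comp_apply]
    rw [Coalgebra.lTensor_counit_comul]
    simp
  have hstar : conv13 k P₂ P₁ = LinearMap.id := by
    apply ext_via_surj13 _ hπ
    apply TensorProduct.ext'
    intro x y
    simp only [LinearMap.coe_comp, Function.comp_apply, TensorProduct.map_tmul,
      Submodule.coe_subtype, LinearMap.mul'_apply, LinearMap.id_coe, id_eq]
    have hk := key _ (hB₂ _ x.2) _ (hB₁ _ y.2)
    simp only [hG, LinearMap.coe_comp, LinearEquiv.coe_coe, Function.comp_apply] at hk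
    rw [conv13_apply, Bialgebra.comul_mul, hk, hE₂Δ, hE₁Δ, hP₂id _ x.2, hP₁id _ y.2]
  have hfP₂ : conv13 k f (ι.toLinearMap ∘ₗ P₂) = oneConv13 k := by
    ext b
    rw [conv13_apply, oneConv13_apply]
    exact hconv₁ b
  constructor
  · intro b₂ hb₂ b₁ hb₁
    set g₁ : B →ₗ[k] D := f ∘ₗ LinearMap.mulRight k b₁ with hg₁
    set Φ : B ⊗[k] B →ₗ[k] D :=
      LinearMap.mul' k D ∘ₗ TensorProduct.map (ι.toLinearMap ∘ₗ P₂) f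
        ∘ₗ (TensorProduct.comm k B B).toLinearMap with hΦ
    set W : B ⊗[k] B →ₗ[k] B :=
      (TensorProduct.rid k B).toLinearMap
        ∘ₗ LinearMap.lTensor B (Coalgebra.counit (R := k)) with hWdef
    have hWpure : ∀ (a b : B), W (a ⊗ₜ[k] b) = Coalgebra.counit (R := k) b • a := by
      intro a b; simp [hWdef]
    have hWΔ : W (Coalgebra.comul (R := k) b₁) = b₁ := by
      simp only [hWdef, LinearMap.coe_comp, LinearEquiv.coe_coe, Function.comp_apply]
      rw [Coalgebra.lTensor_counit_comul]
      simp
    have C2pure : ∀ (x c₁ : B), c₁ ∈ B₁ → ∀ z : B ⊗[k] B,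
        Φ (z * (x ⊗ₜ[k] c₁))
          = Φ (z * ((Coalgebra.counit (R := k) c₁ • x) ⊗ₜ[k] (1 : B))) := by
      intro x c₁ hc₁
      have h : Φ ∘ₗ LinearMap.mulRight k (x ⊗ₜ[k] c₁)
          = Φ ∘ₗ LinearMap.mulRight k ((Coalgebra.counit (R := k) c₁ • x) ⊗ₜ[k] (1 : B)) :=
        TensorProduct.ext' fun p q => by
          simp only [LinearMap.coe_comp, Function.comp_apply, LinearMap.mulRight_apply,
            Algebra.TensorProduct.tmul_mul_tmul, hΦ, LinearEquiv.coe_coe,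
            TensorProduct.comm_tmul, TensorProduct.map_tmul, LinearMap.mul'_apply,
            AlgHom.toLinearMap_apply, mul_one]
          rw [hP₂r _ hc₁, map_smul, mul_smul_comm, smul_mul_assoc, map_smul, mul_smul_comm]
      exact fun z => LinearMap.congr_fun h z
    have C2 : ∀ z : B ⊗[k] B,
        ∀ v ∈ sTen k (⊤ : Submodule k B) (Subalgebra.toSubmodule B₁),
          Φ (z * v) = Φ (z * (W v ⊗ₜ[k] (1 : B))) := by
      intro z
      have h := sTen13_induction (k := k)
        (L := Φ ∘ₗ LinearMap.mulLeft k z)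
        (L' := Φ ∘ₗ LinearMap.mulLeft k z ∘ₗ ((TensorProduct.mk k B B).flip 1) ∘ₗ W)
        (fun (x : (⊤ : Submodule k B)) (c₁ : Subalgebra.toSubmodule B₁) => by
          simp only [LinearMap.coe_comp, Function.comp_apply, LinearMap.mulLeft_apply,
            LinearMap.flip_apply, TensorProduct.mk_apply]
          rw [hWpure, C2pure _ _ c₁.2 z])
      intro v hv
      have := h v hv
      simpa using this
    have diamond : ∀ c ∈ B₂, conv13 k (ι.toLinearMap ∘ₗ P₂) g₁ c
        = (Coalgebra.counit (R := k) b₁ * Coalgebra.counit (R := k) c) • (1 : D) := by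
      intro c hc
      have e0 : Φ (Coalgebra.comul (R := k) (c * b₁))
          = (Coalgebra.counit (R := k) c * Coalgebra.counit (R := k) b₁) • (1 : D) := by
        have h := hconv₂ (c * b₁)
        rw [Bialgebra.counit_mul] at h
        simpa [hΦ] using h
      rw [Bialgebra.comul_mul, C2 _ _ (hB₁ _ hb₁), hWΔ] at e0
      have hbr : Φ ∘ₗ LinearMap.mulRight k (b₁ ⊗ₜ[k] (1 : B))
          = LinearMap.mul' k D ∘ₗ TensorProduct.map (ι.toLinearMap ∘ₗ P₂) g₁
            ∘ₗ (TensorProduct.comm k B B).toLinearMap :=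
        TensorProduct.ext' fun p q => by
          simp [hΦ, hg₁, Algebra.TensorProduct.tmul_mul_tmul]
      have e1 := LinearMap.congr_fun hbr (Coalgebra.comul (R := k) c)
      simp only [LinearMap.coe_comp, LinearEquiv.coe_coe, Function.comp_apply,
        LinearMap.mulRight_apply] at e1
      rw [conv13_apply, ← e1, e0, mul_comm]
    have hconvfh : conv13 k f (conv13 k (ι.toLinearMap ∘ₗ P₂) g₁) = g₁ := by
      rw [← conv13_assoc, hfP₂, oneConv13_conv13]
    have hθ := sTen13_induction (k := k)
      (L := LinearMap.mul' k D ∘ₗ TensorProduct.map f (conv13 k (ι.toLinearMap ∘ₗ P₂) g₁)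
        ∘ₗ (TensorProduct.comm k B B).toLinearMap)
      (L' := Coalgebra.counit (R := k) b₁ •
        (LinearMap.mul' k D ∘ₗ TensorProduct.map f (oneConv13 k)
          ∘ₗ (TensorProduct.comm k B B).toLinearMap))
      (fun (p : Subalgebra.toSubmodule B₂) (q : (⊤ : Submodule k B)) => by
        simp only [LinearMap.coe_comp, LinearEquiv.coe_coe, Function.comp_apply,
          LinearMap.smul_apply, TensorProduct.comm_tmul, TensorProduct.map_tmul,
          LinearMap.mul'_apply]
        rw [diamond _ p.2, oneConv13_apply, mul_smul_comm, mul_smul_comm, smul_smul])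
    have e1 := hθ _ (hB₂ _ hb₂)
    simp only [LinearMap.coe_comp, LinearEquiv.coe_coe, Function.comp_apply,
      LinearMap.smul_apply] at e1
    have e2 := LinearMap.congr_fun hconvfh b₂
    rw [conv13_apply] at e2
    have e3 : (LinearMap.mul' k D) ((TensorProduct.map f (oneConv13 k))
        ((TensorProduct.comm k B B) (Coalgebra.comul (R := k) b₂))) = f b₂ := by
      have := LinearMap.congr_fun (conv13_oneConv13 k f) b₂
      rwa [conv13_apply] at this
    rw [e1, e3] at e2
    have : g₁ b₂ = f (b₂ * b₁) := by simp [hg₁]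
    rw [this] at e2
    exact e2.symm
  · intro b
    have h1 : conv13 k (ι.toLinearMap ∘ₗ P₂) (ι.toLinearMap ∘ₗ P₁) = ι.toLinearMap := by
      rw [conv13_comp_algHom, hstar, LinearMap.comp_id]
    have h2 : conv13 k f ι.toLinearMap = ι.toLinearMap ∘ₗ P₁ := by
      calc conv13 k f ι.toLinearMap
          = conv13 k f (conv13 k (ι.toLinearMap ∘ₗ P₂) (ι.toLinearMap ∘ₗ P₁)) := by rw [h1]
        _ = conv13 k (conv13 k f (ι.toLinearMap ∘ₗ P₂)) (ι.toLinearMap ∘ₗ P₁) :=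
            (conv13_assoc k f _ _).symm
        _ = conv13 k (oneConv13 k) (ι.toLinearMap ∘ₗ P₁) := by rw [hfP₂]
        _ = ι.toLinearMap ∘ₗ P₁ := oneConv13_conv13 k _
    have := LinearMap.congr_fun h2 b
    rw [conv13_apply] at this
    simpa using this
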